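/- For every 4-list assignment L of an n-vertex path, there are at least 2^{n+1} nonrepetitive L-colourings. In particular, every path is nonrepetitively 4-choosable. -/

import Mathlib

/-- A colouring `c` of the path on vertices `0, 1, …, n-1` is nonrepetitive if there
is no block of `2i` consecutive vertices whose first half receives the same sequence
of colours as its second half. -/
def NonrepetitivePathColoring {C : Type*} (n : ℕ) (c : Fin n → C) : Prop :=
  ∀ j i : ℕ, ∀ _hi : 0 < i, ∀ hji : j + 2 * i ≤ n,
    ∃ k : ℕ, ∃ hk : k < i, c ⟨j + k, by omega⟩ ≠ c ⟨j + i + k, by omega⟩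

namespace NRPath

variable {C : Type*}

lemma ncard_sprod {α β : Type*} (s : Set α) (t : Set β) :
    (s ×ˢ t).ncard = s.ncard * t.ncard := by
  rw [← Nat.card_coe_set_eq, ← Nat.card_coe_set_eq, ← Nat.card_coe_set_eq,
    Nat.card_congr (Equiv.Set.prod s t), Nat.card_prod]

lemma ncard_biUnion_le {α β : Type*} (s : Finset β) (f : β → Set α) :
    (⋃ i ∈ s, f i).ncard ≤ ∑ i ∈ s, (f i).ncard := by
  classical
  induction s using Finset.induction with
  | empty => simp
  | insert a s h ih =>
    rw [Finset.set_biUnion_insert, Finset.sum_insert h]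
    exact le_trans (Set.ncard_union_le _ _) (by omega)

/-- The set of nonrepetitive list colourings of the first `m` vertices. -/
def SS (L' : ℕ → Finset C) (m : ℕ) : Set (Fin m → C) :=
  {c | (∀ v : Fin m, c v ∈ L' v.val) ∧ NonrepetitivePathColoring m c}

lemma SS_finite (L' : ℕ → Finset C) (m : ℕ) : (SS L' m).Finite := by
  apply Set.Finite.subset (Set.Finite.pi (t := fun v : Fin m => ((L' v.val : Set C)))
    (fun i => (L' i.val).finite_toSet))
  intro c hc
  exact fun v _ => hc.1 v

lemma lists_finite (L' : ℕ → Finset C) (m : ℕ) :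
    {c : Fin m → C | ∀ v : Fin m, c v ∈ L' v.val}.Finite := by
  apply Set.Finite.subset (Set.Finite.pi (t := fun v : Fin m => ((L' v.val : Set C)))
    (fun i => (L' i.val).finite_toSet))
  intro c hc
  exact fun v _ => hc v

/-- Truncation preserves nonrepetitiveness. -/
lemma nonrep_trunc {m m' : ℕ} (h : m' ≤ m) {c : Fin m → C}
    (hc : NonrepetitivePathColoring m c) :
    NonrepetitivePathColoring m' (fun v => c (Fin.castLE h v)) := by
  intro j i hi hji
  obtain ⟨k, hk, hne⟩ := hc j i hi (by omega)
  refine ⟨k, hk, ?_⟩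
  simpa [Fin.castLE] using hne

end NRPath

namespace NRPath

variable {C : Type*}

/-- Extensions: colourings of `m+1` vertices whose first `m` vertices are nonrepetitive. -/
def EE (L' : ℕ → Finset C) (m : ℕ) : Set (Fin (m+1) → C) :=
  {c | (∀ v : Fin (m+1), c v ∈ L' v.val) ∧ NonrepetitivePathColoring m (Fin.init c)}

lemma snoc_inj {m : ℕ} : Function.Injective
    (fun p : (Fin m → C) × C => (Fin.snoc p.1 p.2 : Fin (m+1) → C)) := by
  rintro ⟨a, b⟩ ⟨a', b'⟩ h
  simp only [Prod.mk.injEq]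
  constructor
  · funext i
    have := congrFun h i.castSucc
    simpa using this
  · have := congrFun h (Fin.last m)
    simpa using this

lemma EE_eq (L' : ℕ → Finset C) (m : ℕ) :
    EE L' m = (fun p : (Fin m → C) × C => (Fin.snoc p.1 p.2 : Fin (m+1) → C)) ''
      ((SS L' m) ×ˢ (L' m : Set C)) := by
  ext c
  constructor
  · rintro ⟨h1, h2⟩
    refine ⟨(Fin.init c, c (Fin.last m)), ⟨⟨fun v => ?_, h2⟩, ?_⟩, Fin.snoc_init_self c⟩
    · simpa [Fin.init] using h1 v.castSucc
    · simpa using h1 (Fin.last m)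
  · rintro ⟨⟨a, b⟩, ⟨⟨ha, hna⟩, hb⟩, rfl⟩
    refine ⟨fun v => ?_, by simpa [Fin.init_snoc] using hna⟩
    induction v using Fin.lastCases with
    | last => simpa using hb
    | cast i => simpa using ha i

lemma EE_ncard (L' : ℕ → Finset C) (m : ℕ) :
    (EE L' m).ncard = (SS L' m).ncard * (L' m).card := by
  rw [EE_eq, Set.ncard_image_of_injective _ snoc_inj, ncard_sprod, Set.ncard_coe_finset]

/-- Colourings with a repetition of period `i` at the very end of the path. -/
def BB (m i : ℕ) : Set (Fin (m+1) → C) :=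
  {c | ∀ k, k < i → ∀ (h1 : m+1-2*i+k < m+1) (h2 : m+1-i+k < m+1),
    c ⟨m+1-2*i+k, h1⟩ = c ⟨m+1-i+k, h2⟩}

lemma cover (L' : ℕ → Finset C) (m : ℕ) :
    EE L' m ⊆ SS L' (m+1) ∪ ⋃ i ∈ Finset.Icc 1 ((m+1)/2), (BB m i ∩ EE L' m) := by
  intro c hc
  by_cases hS : NonrepetitivePathColoring (m+1) c
  · exact Or.inl ⟨hc.1, hS⟩
  · right
    simp only [NonrepetitivePathColoring, not_forall, not_exists, not_not] at hS
    obtain ⟨j, i, hi, hji, hall⟩ := hS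
    by_cases hjm : j + 2 * i ≤ m
    · exfalso
      obtain ⟨k, hk, hne⟩ := hc.2 j i hi hjm
      exact hne (hall k hk)
    · have hj : j = m + 1 - 2 * i := by omega
      refine Set.mem_biUnion (Finset.mem_Icc.mpr ⟨hi, by omega⟩) ⟨?_, hc⟩
      intro k hk h1 h2
      have e1 : (⟨m+1-2*i+k, h1⟩ : Fin (m+1)) = ⟨j + k, by omega⟩ :=
        Fin.ext (show m+1-2*i+k = j + k by omega)
      have e2 : (⟨m+1-i+k, h2⟩ : Fin (m+1)) = ⟨j + i + k, by omega⟩ :=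
        Fin.ext (show m+1-i+k = j + i + k by omega)
      rw [e1, e2]
      exact hall k hk

lemma bad_ncard_le (L' : ℕ → Finset C) {m i : ℕ} (hi : 1 ≤ i) (h2i : 2 * i ≤ m + 1) :
    (BB m i ∩ EE L' m).ncard ≤ (SS L' (m+1-i)).ncard := by
  set T : (Fin (m+1) → C) → (Fin (m+1-i) → C) :=
    fun c v => c (Fin.castLE (by omega) v) with hT
  have hinj : Set.InjOn T (BB m i ∩ EE L' m) := by
    intro c hc c' hc' heq
    funext v
    by_cases hv : v.val < m + 1 - i
    · exact congrFun heq ⟨v.val, hv⟩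
    · have hvlt := v.isLt
      obtain ⟨k, hkeq⟩ : ∃ k, v.val = m + 1 - i + k := ⟨v.val - (m + 1 - i), by omega⟩
      have hk : k < i := by omega
      have b1 := hc.1 k hk (by omega) (by omega)
      have b2 := hc'.1 k hk (by omega) (by omega)
      have hv' : v = ⟨m+1-i+k, by omega⟩ := Fin.ext hkeq
      have hmid := congrFun heq ⟨m+1-2*i+k, by omega⟩
      calc c v = c ⟨m+1-i+k, by omega⟩ := congrArg c hv'
        _ = c ⟨m+1-2*i+k, by omega⟩ := b1.symm
        _ = c' ⟨m+1-2*i+k, by omega⟩ := hmid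
        _ = c' ⟨m+1-i+k, by omega⟩ := b2
        _ = c' v := (congrArg c' hv').symm
  rw [← Set.ncard_image_of_injOn hinj]
  refine Set.ncard_le_ncard ?_ (SS_finite L' (m+1-i))
  rintro - ⟨c, hc, rfl⟩
  refine ⟨fun v => hc.2.1 (Fin.castLE (by omega) v), ?_⟩
  intro j i' hi' hji'
  obtain ⟨k, hk, hne⟩ := hc.2.2 j i' hi' (by omega)
  exact ⟨k, hk, hne⟩

lemma sum_le (g : ℕ → ℕ) (m : ℕ) (hg : ∀ k, k < m → 2 * g k ≤ g (k+1)) :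
    ∀ t, 1 ≤ t → t ≤ m → (∑ i ∈ Finset.Icc 1 t, g (m+1-i)) + g (m+1-t) ≤ 2 * g m := by
  intro t
  induction t with
  | zero => omega
  | succ t ih =>
    intro _ htm
    by_cases ht : t = 0
    · subst ht
      simp [Finset.Icc_self]
      omega
    · rw [Finset.sum_Icc_succ_top (by omega)]
      have hd := hg (m - t) (by omega)
      have hih := ih (by omega) (by omega)
      have e : m - t + 1 = m + 1 - t := by omega
      rw [e] at hd
      have e2 : m + 1 - (t+1) = m - t := by omega
      rw [e2]
      omega

lemma doubling (L' : ℕ → Finset C) (hL4 : ∀ k, 4 ≤ (L' k).card) :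
    ∀ m, 2 * (SS L' m).ncard ≤ (SS L' (m+1)).ncard := by
  intro m
  induction m using Nat.strong_induction_on with
  | _ m ih =>
    set t := (m+1)/2 with htdef
    set U := ⋃ i ∈ Finset.Icc 1 t, (BB m i ∩ EE L' m) with hUdef
    have hEfin : (EE L' m).Finite := (lists_finite L' (m+1)).subset (fun c hc => hc.1)
    have hSfin : (SS L' (m+1)).Finite := SS_finite L' (m+1)
    have hUfin : U.Finite := by
      apply Set.Finite.biUnion (Finset.Icc 1 t).finite_toSet
      exact fun i _ => hEfin.subset Set.inter_subset_right
    have hE : (EE L' m).ncard = (SS L' m).ncard * (L' m).card := EE_ncard L' m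
    have h4 : 4 * (SS L' m).ncard ≤ (EE L' m).ncard := by
      rw [hE, mul_comm]
      exact Nat.mul_le_mul_left _ (hL4 m)
    have hU : U.ncard ≤ 2 * (SS L' m).ncard := by
      refine le_trans (ncard_biUnion_le _ _) ?_
      by_cases ht0 : t = 0
      · simp [ht0]
      · calc ∑ i ∈ Finset.Icc 1 t, (BB m i ∩ EE L' m).ncard
            ≤ ∑ i ∈ Finset.Icc 1 t, (SS L' (m+1-i)).ncard := by
              refine Finset.sum_le_sum fun i hi => ?_
              obtain ⟨h1, h2⟩ := Finset.mem_Icc.mp hi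
              exact bad_ncard_le L' h1 (by omega)
          _ ≤ 2 * (SS L' m).ncard := by
              have h2 : (∑ i ∈ Finset.Icc 1 t, (SS L' (m+1-i)).ncard)
                  + (SS L' (m+1-t)).ncard ≤ 2 * (SS L' m).ncard :=
                sum_le (fun k => (SS L' k).ncard) m ih t (by omega) (by omega)
              omega
    have hsplit : (EE L' m).ncard ≤ (SS L' (m+1)).ncard + U.ncard := by
      refine le_trans (Set.ncard_le_ncard (cover L' m) (hSfin.union hUfin)) ?_
      exact Set.ncard_union_le _ _
    omega

lemma base (L' : ℕ → Finset C) (hL4 : ∀ k, 4 ≤ (L' k).card) :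
    4 ≤ (SS L' 1).ncard := by
  have hsub : (fun (x : C) (_ : Fin 1) => x) '' (L' 0 : Set C) ⊆ SS L' 1 := by
    rintro - ⟨x, hx, rfl⟩
    refine ⟨fun v => ?_, fun j i hi hji => absurd hji (by omega)⟩
    have : v.val = 0 := by omega
    rw [this]
    exact hx
  have hinj : Function.Injective (fun (x : C) (_ : Fin 1) => x) := by
    intro x y h
    exact congrFun h 0
  calc (4 : ℕ) ≤ (L' 0).card := hL4 0
    _ = ((L' 0 : Set C)).ncard := (Set.ncard_coe_finset _).symm
    _ = ((fun (x : C) (_ : Fin 1) => x) '' (L' 0 : Set C)).ncard :=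
        (Set.ncard_image_of_injective _ hinj).symm
    _ ≤ (SS L' 1).ncard := Set.ncard_le_ncard hsub (SS_finite L' 1)

lemma grow (L' : ℕ → Finset C) (hL4 : ∀ k, 4 ≤ (L' k).card) :
    ∀ m, 1 ≤ m → 2 ^ (m+1) ≤ (SS L' m).ncard := by
  intro m hm
  induction m, hm using Nat.le_induction with
  | base => simpa using base L' hL4
  | succ m hm ih =>
    have := doubling L' hL4 m
    calc 2 ^ (m+2) = 2 * 2 ^ (m+1) := by ring
      _ ≤ 2 * (SS L' m).ncard := by omega
      _ ≤ (SS L' (m+1)).ncard := this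

end NRPath

/-- For every 4-list assignment `L` of an `n`-vertex path, there are at least
`2^(n+1)` nonrepetitive `L`-colourings; in particular paths are nonrepetitively
4-choosable. -/
theorem path_four_list_count {C : Type*} (n : ℕ) (hn : 1 ≤ n)
    (L : Fin n → Finset C) (hL : ∀ v : Fin n, 4 ≤ (L v).card) :
    2 ^ (n + 1) ≤
      Set.ncard {c : Fin n → C | (∀ v, c v ∈ L v) ∧ NonrepetitivePathColoring n c} := by
  set L' : ℕ → Finset C := fun k => if h : k < n then L ⟨k, h⟩ else L ⟨0, hn⟩ with hL'
  have hL4 : ∀ k, 4 ≤ (L' k).card := by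
    intro k
    by_cases h : k < n <;> simp [hL', h, hL]
  have hset : {c : Fin n → C | (∀ v, c v ∈ L v) ∧ NonrepetitivePathColoring n c}
      = NRPath.SS L' n := by
    ext c
    simp only [NRPath.SS, Set.mem_setOf_eq, hL']
    constructor
    · rintro ⟨h1, h2⟩
      exact ⟨fun v => by simpa [v.isLt] using h1 v, h2⟩
    · rintro ⟨h1, h2⟩
      exact ⟨fun v => by simpa [v.isLt] using h1 v, h2⟩
  rw [hset]
  exact NRPath.grow L' hL4 n hn
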